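/- Let n ≥ 5 be an integer. Then μ₂(𝔏(Q_n)) ≤ 4, where μ₂ denotes the second-smallest eigenvalue. -/

import Mathlib

open Matrix

/-- The ascending sorted list of eigenvalues (with multiplicity) of a real
symmetric (Hermitian) matrix; junk value `[]` otherwise. -/
noncomputable def eigsList {m : Type*} [Fintype m] [DecidableEq m]
    (M : Matrix m m ℝ) : List ℝ :=
  if h : M.IsHermitian then Multiset.sort (Finset.univ.val.map h.eigenvalues) (· ≤ ·)
  else []

/-- The `k`-th largest eigenvalue (1-indexed, counted with multiplicity). -/
noncomputable def kthLargest {m : Type*} [Fintype m] [DecidableEq m]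
    (M : Matrix m m ℝ) (k : ℕ) : ℝ :=
  (eigsList M).getD (Fintype.card m - k) 0

/-- The `k`-th smallest eigenvalue (1-indexed, counted with multiplicity). -/
noncomputable def kthSmallest {m : Type*} [Fintype m] [DecidableEq m]
    (M : Matrix m m ℝ) (k : ℕ) : ℝ :=
  (eigsList M).getD (k - 1) 0

/-- The Laplacian `𝔏(M) = diag(M·1) − M`. -/
noncomputable def Lap {n : ℕ} (M : Matrix (Fin n) (Fin n) ℝ) : Matrix (Fin n) (Fin n) ℝ :=
  Matrix.diagonal (fun i => ∑ j, M i j) - M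

/-- The matrix `Q_n` (1-indexed description, realized on `Fin n`). -/
noncomputable def Qmat (n : ℕ) : Matrix (Fin n) (Fin n) ℝ := fun i j =>
  let d := ((i.val : ℤ) - (j.val : ℤ)).natAbs
  if d = 0 then
    (if i.val = 0 ∨ i.val = n - 1 then ((n : ℝ) ^ 2 - n - 6) / 2
     else if i.val = 1 ∨ i.val = n - 2 then ((n : ℝ) ^ 2 - 3 * n - 2) / 2
     else ((n : ℝ) ^ 2 - 3 * n - 6) / 2)
  else if d = 1 then (n : ℝ) - 2
  else if d = 2 then 2
  else 0

/-- The matrix `Q'_n` (1-indexed description, realized on `Fin n`). -/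
noncomputable def Qp (n : ℕ) : Matrix (Fin n) (Fin n) ℝ := fun i j =>
  let a := i.val + 1
  let b := j.val + 1
  if (a = 1 ∧ b = 2) ∨ (a = 2 ∧ b = 1) then (n : ℝ) - 2
  else if (a = 1 ∧ b = 3) ∨ (a = 3 ∧ b = 1) then 2
  else if a = 2 ∧ b = 2 then 1
  else if (a = 2 ∧ b = 3) ∨ (a = 3 ∧ b = 2) then 1
  else if a = 3 ∧ b = 3 then (n : ℝ) - 4
  else if (3 ≤ a ∧ a ≤ n - 1 ∧ b = a + 1) ∨ (3 ≤ b ∧ b ≤ n - 1 ∧ a = b + 1) then 1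
  else if a = b ∧ 4 ≤ a ∧ a ≤ n - 1 then (n : ℝ) - 2
  else if a = n ∧ b = n then (n : ℝ) - 1
  else 0


section Aux
open Finset

lemma dot_self_pos {n : ℕ} {u : Fin n → ℝ} (hu : u ≠ 0) : 0 < u ⬝ᵥ u := by
  rcases (Finset.sum_nonneg fun i _ => mul_self_nonneg (u i) : 0 ≤ u ⬝ᵥ u).lt_or_eq with h | h
  · exact h
  · exact absurd (dotProduct_self_eq_zero.mp h.symm) hu

/-- If some index `i₀` dominates: all other eigenvalues are > 4, we get a contradiction
from a 2-dim subspace with Rayleigh quotient ≤ 4. -/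
lemma key_aux {n : ℕ} (A : Matrix (Fin n) (Fin n) ℝ) (hA : A.IsHermitian)
    (u v : Fin n → ℝ) (hu : u ≠ 0) (hv : v ≠ 0) (huv : u ⬝ᵥ v = 0)
    (hAu : A *ᵥ u = 0) (hq : v ⬝ᵥ (A *ᵥ v) ≤ 4 * (v ⬝ᵥ v))
    (i₀ : Fin n) (big : ∀ j, j ≠ i₀ → 4 < hA.eigenvalues j) : False := by
  set lam := hA.eigenvalues with hlam
  set e : Fin n → Fin n → ℝ := fun i => (hA.eigenvectorBasis i : EuclideanSpace ℝ (Fin n))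
    with he
  have heig : ∀ i, A *ᵥ e i = lam i • e i := fun i => hA.mulVec_eigenvectorBasis i
  have horth : ∀ i j, e i ⬝ᵥ e j = if i = j then 1 else 0 := by
    intro i j
    have h := hA.eigenvectorBasis.orthonormal
    rw [orthonormal_iff_ite] at h
    have := h i j
    simpa [PiLp.inner_apply, dotProduct, he, mul_comm] using this
  have hAt : Aᵀ = A := by
    have := hA
    rwa [Matrix.IsHermitian, conjTranspose_eq_transpose_of_trivial] at this
  have hsymdot : ∀ x : Fin n → ℝ, ∀ i, e i ⬝ᵥ (A *ᵥ x) = lam i * (e i ⬝ᵥ x) := by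
    intro x i
    rw [Matrix.dotProduct_mulVec, ← Matrix.mulVec_transpose, hAt, heig]
    simp [smul_dotProduct]
  have hrepr : ∀ x : Fin n → ℝ, ∀ k, x k = ∑ i, (e i ⬝ᵥ x) * e i k := by
    intro x k
    have h := hA.eigenvectorBasis.sum_repr (WithLp.toLp 2 x)
    have h2 := congrFun (congrArg (fun z : EuclideanSpace ℝ (Fin n) => (z : Fin n → ℝ)) h) k
    simp only [OrthonormalBasis.repr_apply_apply, PiLp.inner_apply, RCLike.inner_apply,
      starRingEnd_apply, star_trivial] at h2
    rw [← h2]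
    rw [show ((∑ i, (∑ j, x j * (hA.eigenvectorBasis i : EuclideanSpace ℝ (Fin n)) j) •
        (hA.eigenvectorBasis i) : EuclideanSpace ℝ (Fin n)) : Fin n → ℝ) k
        = ∑ i, (∑ j, x j * (hA.eigenvectorBasis i : EuclideanSpace ℝ (Fin n)) j) *
          (hA.eigenvectorBasis i : EuclideanSpace ℝ (Fin n)) k from by
      simp [WithLp.ofLp_sum, Finset.sum_apply]]
    simp [he, dotProduct, mul_comm]
  -- choose coefficients a b
  set p := e i₀ ⬝ᵥ u with hp
  set q := e i₀ ⬝ᵥ v with hq0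
  obtain ⟨a, b, hab, hzero⟩ : ∃ a b : ℝ, ¬(a = 0 ∧ b = 0) ∧ a * p + b * q = 0 := by
    by_cases h : p = 0 ∧ q = 0
    · exact ⟨1, 0, by norm_num, by rw [h.1, h.2]; ring⟩
    · exact ⟨q, -p, by rintro ⟨h1, h2⟩; exact h ⟨neg_eq_zero.mp h2, h1⟩, by ring⟩
  set x : Fin n → ℝ := a • u + b • v with hx
  set c : Fin n → ℝ := fun i => e i ⬝ᵥ x with hc
  have hc0 : c i₀ = 0 := by
    simp only [hc, hx, dotProduct_add, dotProduct_smul, smul_eq_mul, ← hp, ← hq0]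
    linarith [hzero]
  have hdotexp : ∀ y : Fin n → ℝ, x ⬝ᵥ y = ∑ i, c i * (e i ⬝ᵥ y) := by
    intro y
    calc x ⬝ᵥ y = ∑ k, (∑ i, c i * e i k) * y k := by
          apply Finset.sum_congr rfl
          intro k _
          rw [← hrepr x k]
      _ = ∑ k, ∑ i, c i * e i k * y k := by
          apply Finset.sum_congr rfl; intro k _; rw [Finset.sum_mul]
      _ = ∑ i, ∑ k, c i * e i k * y k := Finset.sum_comm
      _ = ∑ i, c i * (e i ⬝ᵥ y) := by
          apply Finset.sum_congr rfl; intro i _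
          rw [dotProduct, Finset.mul_sum]
          exact Finset.sum_congr rfl fun k _ => by ring
  have hxx : x ⬝ᵥ x = ∑ i, c i * c i := by
    rw [hdotexp x]
  have hxAx : x ⬝ᵥ (A *ᵥ x) = ∑ i, lam i * (c i * c i) := by
    rw [hdotexp (A *ᵥ x)]
    exact Finset.sum_congr rfl fun i _ => by rw [hsymdot x i]; ring
  -- positivity of x
  have hvv : 0 < v ⬝ᵥ v := dot_self_pos hv
  have huu : 0 < u ⬝ᵥ u := dot_self_pos hu
  have hxxval : x ⬝ᵥ x = a^2 * (u ⬝ᵥ u) + b^2 * (v ⬝ᵥ v) := by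
    have hvu : v ⬝ᵥ u = 0 := by rwa [dotProduct_comm]
    simp only [hx, dotProduct_add, add_dotProduct, dotProduct_smul,
      smul_dotProduct, smul_eq_mul, huv, hvu]
    ring
  have hxpos : 0 < x ⬝ᵥ x := by
    rw [hxxval]
    rcases not_and_or.mp hab with h | h
    · have : 0 < a^2 * (u ⬝ᵥ u) := mul_pos (by positivity) huu
      nlinarith [sq_nonneg b, mul_nonneg (sq_nonneg b) hvv.le]
    · have : 0 < b^2 * (v ⬝ᵥ v) := mul_pos (by positivity) hvv
      nlinarith [mul_nonneg (sq_nonneg a) huu.le]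
  -- Rayleigh bound on x
  have hform : x ⬝ᵥ (A *ᵥ x) ≤ 4 * (x ⬝ᵥ x) := by
    have hAx : A *ᵥ x = b • (A *ᵥ v) := by
      rw [hx, Matrix.mulVec_add, Matrix.mulVec_smul, Matrix.mulVec_smul, hAu]
      simp
    have huAv : u ⬝ᵥ (A *ᵥ v) = 0 := by
      rw [Matrix.dotProduct_mulVec, ← Matrix.mulVec_transpose, hAt, hAu]
      simp
    have h1 : x ⬝ᵥ (A *ᵥ x) = b^2 * (v ⬝ᵥ (A *ᵥ v)) := by
      rw [hAx, hx]
      simp only [add_dotProduct, smul_dotProduct, dotProduct_smul,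
        smul_eq_mul, huAv]
      ring
    rw [h1, hxxval]
    nlinarith [mul_nonneg (sq_nonneg a) huu.le, sq_nonneg b, hvv]
  -- contradiction
  obtain ⟨i₁, hi₁⟩ : ∃ i, c i ≠ 0 := by
    by_contra h
    push_neg at h
    rw [hxx] at hxpos
    have : (∑ i, c i * c i) = 0 := Finset.sum_eq_zero fun i _ => by rw [h i]; ring
    linarith
  have hi₁ne : i₁ ≠ i₀ := fun h => hi₁ (h ▸ hc0)
  have hsumpos : 0 < ∑ i, (lam i - 4) * (c i * c i) := by
    apply Finset.sum_pos'
    · intro i _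
      rcases eq_or_ne i i₀ with rfl | h
      · rw [hc0]; simp
      · exact mul_nonneg (by linarith [big i h]) (mul_self_nonneg _)
    · exact ⟨i₁, Finset.mem_univ _, mul_pos (by linarith [big i₁ hi₁ne]) 
        (mul_self_pos.mpr hi₁)⟩
  have : ∑ i, (lam i - 4) * (c i * c i) = (x ⬝ᵥ (A *ᵥ x)) - 4 * (x ⬝ᵥ x) := by
    rw [hxAx, hxx, Finset.mul_sum, ← Finset.sum_sub_distrib]
    exact Finset.sum_congr rfl fun i _ => by ring
  linarith [hform, hsumpos, this]

lemma key {n : ℕ} (hn : 1 ≤ n) (A : Matrix (Fin n) (Fin n) ℝ) (hA : A.IsHermitian)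
    (u v : Fin n → ℝ) (hu : u ≠ 0) (hv : v ≠ 0) (huv : u ⬝ᵥ v = 0)
    (hAu : A *ᵥ u = 0) (hq : v ⬝ᵥ (A *ᵥ v) ≤ 4 * (v ⬝ᵥ v)) :
    kthSmallest A 2 ≤ 4 := by
  by_contra hcon
  push_neg at hcon
  rw [kthSmallest, eigsList, dif_pos hA] at hcon
  set l := Multiset.sort (Finset.univ.val.map hA.eigenvalues) (· ≤ ·) with hl
  have hlen : l.length = n := by
    rw [hl, Multiset.length_sort, Multiset.card_map]
    simp
  have hsort : l.Pairwise (· ≤ ·) := Multiset.pairwise_sort _ _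
  have hlen2 : 2 ≤ l.length := by
    by_contra h
    push_neg at h
    rw [List.getD_eq_default _ _ (show l.length ≤ 2 - 1 by omega)] at hcon
    norm_num at hcon
  have hget : (4:ℝ) < l[1]'(by omega) := by
    rw [List.getD_eq_getElem _ _ (show 2 - 1 < l.length by omega)] at hcon
    exact hcon
  have hcount : l.countP (fun x => decide (x ≤ 4)) ≤ 1 := by
    have hdrop : List.countP (fun x => decide (x ≤ 4)) (l.drop 1) = 0 := by
      rw [List.countP_eq_zero]
      intro a ha
      obtain ⟨i, hi, ha'⟩ := List.mem_iff_getElem.mp ha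
      have hlt : 1 + i < l.length := by
        rw [List.length_drop] at hi; omega
      have hdi : a = l[1 + i]'hlt := by
        rw [← ha', List.getElem_drop]
      have hle : l[1]'(by omega) ≤ l[1 + i]'hlt := by
        have := hsort.rel_get_of_le (a := ⟨1, by omega⟩) (b := ⟨1 + i, hlt⟩)
          (by simp [Fin.le_def])
        simpa [List.get_eq_getElem] using this
      simp only [decide_eq_true_eq]
      push_neg
      rw [hdi]
      linarith
    have htake : List.countP (fun x => decide (x ≤ 4)) (l.take 1) ≤ 1 :=
      le_trans List.countP_le_length (by simp)
    calc l.countP (fun x => decide (x ≤ 4))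
        = List.countP (fun x => decide (x ≤ 4)) (l.take 1 ++ l.drop 1) := by
          rw [List.take_append_drop]
      _ ≤ 1 := by rw [List.countP_append, hdrop]; omega
  have hScard : (Finset.univ.filter (fun i => hA.eigenvalues i ≤ 4)).card ≤ 1 := by
    have h1 : (Finset.univ.filter (fun i => hA.eigenvalues i ≤ 4)).card
        = Multiset.countP (fun x => x ≤ 4) (Finset.univ.val.map hA.eigenvalues) := by
      rw [Multiset.countP_map]
      rfl
    have h2 : Multiset.countP (fun x => x ≤ 4) (Finset.univ.val.map hA.eigenvalues)
        = l.countP (fun x => decide (x ≤ 4)) := by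
      conv_lhs => rw [← Multiset.sort_eq (Finset.univ.val.map hA.eigenvalues) (· ≤ ·)]
      rw [← hl, Multiset.coe_countP]
    omega
  have hbig : ∃ i₀ : Fin n, ∀ j, j ≠ i₀ → 4 < hA.eigenvalues j := by
    by_cases hex : ∃ i, hA.eigenvalues i ≤ 4
    · obtain ⟨i₀, hi₀⟩ := hex
      refine ⟨i₀, fun j hj => ?_⟩
      by_contra hjle
      push_neg at hjle
      have h1 : 1 < (Finset.univ.filter (fun i => hA.eigenvalues i ≤ 4)).card := by
        rw [Finset.one_lt_card]
        exact ⟨j, Finset.mem_filter.mpr ⟨Finset.mem_univ _, hjle⟩,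
          i₀, Finset.mem_filter.mpr ⟨Finset.mem_univ _, hi₀⟩, hj⟩
      omega
    · push_neg at hex
      exact ⟨⟨0, hn⟩, fun j _ => hex j⟩
  obtain ⟨i₀, big⟩ := hbig
  exact key_aux A hA u v hu hv huv hAu hq i₀ big


lemma sum_range_cast (n : ℕ) : ∑ i ∈ Finset.range n, (i : ℝ) = n * (n - 1) / 2 := by
  induction n with
  | zero => simp
  | succ m ih =>
    rw [Finset.sum_range_succ, ih]
    push_cast
    ring

lemma sum_range_sq_cast (n : ℕ) :
    ∑ i ∈ Finset.range n, (i : ℝ)^2 = n * (n - 1) * (2 * n - 1) / 6 := by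
  induction n with
  | zero => simp
  | succ m ih =>
    rw [Finset.sum_range_succ, ih]
    push_cast
    ring

lemma rowD (k m : ℕ) (hk : 1 ≤ k) :
    ∑ j ∈ Finset.range m, (if ((m:ℤ) - (j:ℤ)).natAbs = k then (1:ℝ) else 0)
      = if k ≤ m then 1 else 0 := by
  by_cases hkm : k ≤ m
  · rw [if_pos hkm]
    rw [Finset.sum_eq_single_of_mem (m - k) (Finset.mem_range.mpr (by omega))]
    · rw [if_pos (by push_cast; omega)]
    · intro j hj hne
      rw [if_neg]
      have := Finset.mem_range.mp hj
      push_cast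
      omega
  · rw [if_neg hkm]
    apply Finset.sum_eq_zero
    intro j hj
    rw [if_neg]
    have := Finset.mem_range.mp hj
    push_cast
    omega

lemma countD (k : ℕ) (hk : 1 ≤ k) (n : ℕ) :
    ∑ i ∈ Finset.range n, ∑ j ∈ Finset.range n,
      (if ((i:ℤ) - (j:ℤ)).natAbs = k then (1:ℝ) else 0) = 2 * ((n - k : ℕ) : ℝ) := by
  induction n with
  | zero => simp
  | succ m ih =>
    rw [Finset.sum_range_succ]
    have h1 : ∑ i ∈ Finset.range m, ∑ j ∈ Finset.range (m+1),
          (if ((i:ℤ) - (j:ℤ)).natAbs = k then (1:ℝ) else 0)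
        = (∑ i ∈ Finset.range m, ∑ j ∈ Finset.range m,
            (if ((i:ℤ) - (j:ℤ)).natAbs = k then (1:ℝ) else 0))
          + ∑ i ∈ Finset.range m, (if ((i:ℤ) - (m:ℤ)).natAbs = k then (1:ℝ) else 0) := by
      rw [← Finset.sum_add_distrib]
      exact Finset.sum_congr rfl fun i _ => Finset.sum_range_succ _ _
    rw [h1, Finset.sum_range_succ, ih]
    have hcol : ∑ i ∈ Finset.range m, (if ((i:ℤ) - (m:ℤ)).natAbs = k then (1:ℝ) else 0)
        = if k ≤ m then 1 else 0 := by
      rw [← rowD k m hk]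
      refine Finset.sum_congr rfl fun i _ => ?_
      have : ((i:ℤ) - (m:ℤ)).natAbs = ((m:ℤ) - (i:ℤ)).natAbs := by omega
      rw [this]
    rw [hcol, rowD k m hk]
    have hfmm : (if ((m:ℤ) - (m:ℤ)).natAbs = k then (1:ℝ) else 0) = 0 := by
      rw [if_neg]; omega
    rw [hfmm]
    by_cases hkm : k ≤ m
    · simp only [if_pos hkm]
      have h2 : m + 1 - k = (m - k) + 1 := by omega
      rw [h2]
      push_cast
      ring
    · simp only [if_neg hkm]
      have h0 : m - k = 0 := by omega
      have h2 : m + 1 - k = 0 := by omega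
      rw [h0, h2]
      norm_num

lemma lap_quadform {n : ℕ} (M : Matrix (Fin n) (Fin n) ℝ) (hM : ∀ i j, M i j = M j i)
    (x : Fin n → ℝ) :
    2 * (x ⬝ᵥ (Lap M *ᵥ x)) = ∑ i, ∑ j, M i j * (x i - x j)^2 := by
  have hd : x ⬝ᵥ ((Matrix.diagonal fun i => ∑ j, M i j) *ᵥ x) = ∑ i, ∑ j, M i j * x i ^ 2 := by
    rw [dotProduct]
    refine Finset.sum_congr rfl fun i _ => ?_
    rw [Matrix.mulVec_diagonal, Finset.sum_mul, Finset.mul_sum]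
    exact Finset.sum_congr rfl fun j _ => by ring
  have hm : x ⬝ᵥ (M *ᵥ x) = ∑ i, ∑ j, M i j * (x i * x j) := by
    rw [dotProduct]
    refine Finset.sum_congr rfl fun i _ => ?_
    rw [Matrix.mulVec, dotProduct, Finset.mul_sum]
    exact Finset.sum_congr rfl fun j _ => by ring
  have hL : x ⬝ᵥ (Lap M *ᵥ x)
      = (∑ i, ∑ j, M i j * x i ^ 2) - ∑ i, ∑ j, M i j * (x i * x j) := by
    rw [Lap, Matrix.sub_mulVec, dotProduct_sub, hd, hm]
  have hflip : ∑ i, ∑ j, M i j * x j ^ 2 = ∑ i, ∑ j, M i j * x i ^ 2 := by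
    rw [Finset.sum_comm]
    exact Finset.sum_congr rfl fun j _ => Finset.sum_congr rfl fun i _ => by rw [hM]
  have hR : ∑ i, ∑ j, M i j * (x i - x j)^2
      = (∑ i, ∑ j, M i j * x i^2) - 2 * (∑ i, ∑ j, M i j * (x i * x j))
        + (∑ i, ∑ j, M i j * x j^2) := by
    rw [Finset.mul_sum, ← Finset.sum_sub_distrib, ← Finset.sum_add_distrib]
    refine Finset.sum_congr rfl fun i _ => ?_
    rw [Finset.mul_sum, ← Finset.sum_sub_distrib, ← Finset.sum_add_distrib]
    exact Finset.sum_congr rfl fun j _ => by ring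
  rw [hR, hflip, hL]
  ring
lemma Qsymm (n : ℕ) (i j : Fin n) : Qmat n i j = Qmat n j i := by
  rcases eq_or_ne i j with rfl | hij
  · rfl
  · have hvij : i.val ≠ j.val := fun h => hij (Fin.ext h)
    have h1 : ((i.val:ℤ) - (j.val:ℤ)).natAbs ≠ 0 := by omega
    have hd : ((j.val:ℤ) - (i.val:ℤ)).natAbs = ((i.val:ℤ) - (j.val:ℤ)).natAbs := by omega
    simp only [Qmat, hd]
    rw [if_neg h1, if_neg h1]

lemma lapQherm (n : ℕ) : (Lap (Qmat n)).IsHermitian := by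
  have hs : ∀ i j : Fin n, Lap (Qmat n) i j = Lap (Qmat n) j i := by
    intro i j
    rcases eq_or_ne i j with rfl | hij
    · rfl
    · simp only [Lap, Matrix.sub_apply, Matrix.diagonal_apply_ne _ hij,
        Matrix.diagonal_apply_ne _ (Ne.symm hij), Qsymm n i j]
  rw [Matrix.IsHermitian]
  ext i j
  rw [Matrix.conjTranspose_apply, star_trivial, hs]

lemma lap_mulVec_one {n : ℕ} (M : Matrix (Fin n) (Fin n) ℝ) :
    Lap M *ᵥ (fun _ => (1:ℝ)) = 0 := by
  funext i
  simp only [Lap, Matrix.sub_mulVec, Pi.sub_apply, Pi.zero_apply]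
  rw [Matrix.mulVec_diagonal]
  simp [Matrix.mulVec, dotProduct]

theorem stmt11 (n : ℕ) (hn : 5 ≤ n) :
    kthSmallest (Lap (Qmat n)) 2 ≤ 4 := by
  have hnR : (5:ℝ) ≤ (n:ℝ) := by exact_mod_cast hn
  set u : Fin n → ℝ := fun _ => 1 with hu_def
  set v : Fin n → ℝ := fun i => 2 * (i.val : ℝ) - ((n:ℝ) - 1) with hv_def
  have hu : u ≠ 0 := by
    intro h
    have := congrFun h ⟨0, by omega⟩
    simp [hu_def] at this
  have hv : v ≠ 0 := by
    intro h
    have := congrFun h ⟨0, by omega⟩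
    simp only [hv_def, Pi.zero_apply] at this
    norm_num at this
    linarith
  have hAu : Lap (Qmat n) *ᵥ u = 0 := lap_mulVec_one _
  -- sum of v is zero
  have hsumv : ∀ x : Fin n → ℝ, u ⬝ᵥ x = ∑ i, x i := by
    intro x
    rw [dotProduct]
    exact Finset.sum_congr rfl fun i _ => one_mul _
  have huv : u ⬝ᵥ v = 0 := by
    rw [hsumv]
    have h1 : ∑ i : Fin n, v i = ∑ i ∈ Finset.range n, (2 * (i:ℝ) - ((n:ℝ) - 1)) :=
      Fin.sum_univ_eq_sum_range (fun i => 2 * (i:ℝ) - ((n:ℝ) - 1)) n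
    rw [h1, Finset.sum_sub_distrib, ← Finset.mul_sum, sum_range_cast, Finset.sum_const,
      Finset.card_range, nsmul_eq_mul]
    ring
  have hvv : v ⬝ᵥ v = (n:ℝ) * ((n:ℝ) - 1) * ((n:ℝ) + 1) / 3 := by
    have h0 : v ⬝ᵥ v = ∑ i ∈ Finset.range n, (2 * (i:ℝ) - ((n:ℝ) - 1))^2 := by
      rw [dotProduct]
      rw [show ∑ i : Fin n, v i * v i = ∑ i : Fin n, (2 * (i.val:ℝ) - ((n:ℝ) - 1))^2 from
        Finset.sum_congr rfl fun i _ => by rw [hv_def]; ring]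
      exact Fin.sum_univ_eq_sum_range (fun i => (2 * (i:ℝ) - ((n:ℝ) - 1))^2) n
    have h1 : ∑ i ∈ Finset.range n, (2 * (i:ℝ) - ((n:ℝ) - 1))^2
        = ∑ i ∈ Finset.range n,
            (4 * (i:ℝ)^2 - (4 * ((n:ℝ) - 1)) * (i:ℝ) + ((n:ℝ) - 1)^2) :=
      Finset.sum_congr rfl fun i _ => by ring
    rw [h0, h1, Finset.sum_add_distrib, Finset.sum_sub_distrib, ← Finset.mul_sum,
      ← Finset.mul_sum, sum_range_cast, sum_range_sq_cast, Finset.sum_const,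
      Finset.card_range, nsmul_eq_mul]
    ring
  -- the quadratic form value
  have hpoint : ∀ i j : Fin n, Qmat n i j * (v i - v j)^2
      = (4 * ((n:ℝ) - 2)) * (if ((i.val:ℤ) - (j.val:ℤ)).natAbs = 1 then (1:ℝ) else 0)
        + 32 * (if ((i.val:ℤ) - (j.val:ℤ)).natAbs = 2 then (1:ℝ) else 0) := by
    intro i j
    have hvij : (v i - v j)^2 = 4 * ((((i.val:ℤ) - (j.val:ℤ)).natAbs : ℝ))^2 := by
      have h1 : v i - v j = 2 * ((((i.val:ℤ) - (j.val:ℤ)) : ℤ) : ℝ) := by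
        rw [hv_def]
        push_cast
        ring
      have h2 : (((((i.val:ℤ) - (j.val:ℤ)).natAbs : ℤ) : ℝ))^2
          = (((((i.val:ℤ) - (j.val:ℤ)) : ℤ) : ℝ))^2 := by
        rw [show ((((i.val:ℤ) - (j.val:ℤ)).natAbs : ℤ) : ℝ)^2
            = (((((i.val:ℤ) - (j.val:ℤ)).natAbs : ℤ)^2 : ℤ) : ℝ) by push_cast; ring]
        rw [Int.natAbs_sq]
        push_cast
        ring
      rw [h1]
      rw [show ((((i.val:ℤ) - (j.val:ℤ)).natAbs : ℝ)) = ((((i.val:ℤ) - (j.val:ℤ)).natAbs : ℤ) : ℝ)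
        from (Int.cast_natCast _).symm]
      rw [h2]
      ring
    set d := ((i.val:ℤ) - (j.val:ℤ)).natAbs with hd
    by_cases h0 : d = 0
    · rw [hvij, h0]
      rw [if_neg (by omega), if_neg (by omega)]
      norm_num
    · by_cases h1 : d = 1
      · have hQ : Qmat n i j = (n:ℝ) - 2 := by
          simp only [Qmat, ← hd, h1]
          norm_num
        rw [hQ, hvij, h1, if_pos rfl, if_neg (by omega)]
        norm_num
        ring
      · by_cases h2 : d = 2
        · have hQ : Qmat n i j = 2 := by
            simp only [Qmat, ← hd, h2]
            norm_num
          rw [hQ, hvij, h2, if_pos rfl, if_neg (by omega)]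
          norm_num
        · have hQ : Qmat n i j = 0 := by
            simp only [Qmat, ← hd]
            rw [if_neg h0, if_neg h1, if_neg h2]
          rw [hQ, if_neg h1, if_neg h2]
          norm_num
  have hform : v ⬝ᵥ (Lap (Qmat n) *ᵥ v) = 4 * ((n:ℝ) - 2) * ((n:ℝ) - 1) + 32 * ((n:ℝ) - 2) := by
    have h2f := lap_quadform (Qmat n) (Qsymm n) v
    have hsum : ∑ i : Fin n, ∑ j : Fin n, Qmat n i j * (v i - v j)^2
        = (4 * ((n:ℝ) - 2)) * (2 * ((n - 1 : ℕ) : ℝ)) + 32 * (2 * ((n - 2 : ℕ) : ℝ)) := by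
      have e1 : ∑ i : Fin n, ∑ j : Fin n, Qmat n i j * (v i - v j)^2
          = ∑ i : Fin n, ∑ j : Fin n,
              ((4 * ((n:ℝ) - 2)) * (if ((i.val:ℤ) - (j.val:ℤ)).natAbs = 1 then (1:ℝ) else 0)
                + 32 * (if ((i.val:ℤ) - (j.val:ℤ)).natAbs = 2 then (1:ℝ) else 0)) :=
        Finset.sum_congr rfl fun i _ => Finset.sum_congr rfl fun j _ => hpoint i j
      have e2 : ∀ (G : ℕ → ℕ → ℝ), (∑ i : Fin n, ∑ j : Fin n, G i.val j.val)
          = ∑ i ∈ Finset.range n, ∑ j ∈ Finset.range n, G i j := by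
        intro G
        rw [show (∑ i : Fin n, ∑ j : Fin n, G i.val j.val)
            = ∑ i : Fin n, ∑ j ∈ Finset.range n, G i.val j from
          Finset.sum_congr rfl fun i _ => Fin.sum_univ_eq_sum_range (G i.val) n]
        exact Fin.sum_univ_eq_sum_range (fun a => ∑ j ∈ Finset.range n, G a j) n
      rw [e1, e2 (fun a b =>
          (4 * ((n:ℝ) - 2)) * (if ((a:ℤ) - (b:ℤ)).natAbs = 1 then (1:ℝ) else 0)
            + 32 * (if ((a:ℤ) - (b:ℤ)).natAbs = 2 then (1:ℝ) else 0))]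
      rw [show (∑ i ∈ Finset.range n, ∑ j ∈ Finset.range n,
          ((4 * ((n:ℝ) - 2)) * (if ((i:ℤ) - (j:ℤ)).natAbs = 1 then (1:ℝ) else 0)
            + 32 * (if ((i:ℤ) - (j:ℤ)).natAbs = 2 then (1:ℝ) else 0)))
          = (4 * ((n:ℝ) - 2)) * (∑ i ∈ Finset.range n, ∑ j ∈ Finset.range n,
              (if ((i:ℤ) - (j:ℤ)).natAbs = 1 then (1:ℝ) else 0))
            + 32 * (∑ i ∈ Finset.range n, ∑ j ∈ Finset.range n,
              (if ((i:ℤ) - (j:ℤ)).natAbs = 2 then (1:ℝ) else 0)) from by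
        rw [Finset.mul_sum, Finset.mul_sum, ← Finset.sum_add_distrib]
        refine Finset.sum_congr rfl fun i _ => ?_
        rw [Finset.mul_sum, Finset.mul_sum, ← Finset.sum_add_distrib]]
      rw [countD 1 (by omega) n, countD 2 (by omega) n]
    rw [hsum] at h2f
    have hc1 : ((n - 1 : ℕ) : ℝ) = (n:ℝ) - 1 := by
      rw [Nat.cast_sub (by omega)]
      norm_num
    have hc2 : ((n - 2 : ℕ) : ℝ) = (n:ℝ) - 2 := by
      rw [Nat.cast_sub (by omega)]
      norm_num
    rw [hc1, hc2] at h2f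
    linarith
  have hq : v ⬝ᵥ (Lap (Qmat n) *ᵥ v) ≤ 4 * (v ⬝ᵥ v) := by
    rw [hform, hvv]
    have h5 : 0 ≤ (n:ℝ) - 5 := by linarith
    have key3 : 0 ≤ ((n:ℝ) - 5) * ((n:ℝ)^2 + 2*(n:ℝ) - 6) := mul_nonneg h5 (by nlinarith)
    nlinarith [key3]
  exact key (by omega) _ (lapQherm n) u v hu hv huv hAu hq

end Aux
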